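/- Maximum principle: let β ∈ [0,1) and u : T_m → ℝ satisfy -Δ_β u(x) ≥ 0 for all x ∈ T_m and liminf_{n→∞} u(x_n) ≥ 0 along every branch {x_n} of T_m. Then u(x) ≥ 0 for all x ∈ T_m. -/

import Mathlib

open Filter Finset Topology

/-- The weight `p_β`: `1` if `β = 0`, and `β/(1-β)` otherwise. -/
noncomputable def pB (β : ℝ) : ℝ := if β = 0 then 1 else β / (1 - β)

/-- Vertices of the regular `m`-branching tree are finite sequences over `Fin m`
(the root is `[]`, the successors of `x` are `i :: x`, the predecessor of `a :: t` is `t`,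
and the level `|x|` is the list length).  The `β`-Laplacian on the tree. -/
noncomputable def lapB (m : ℕ) (β : ℝ) (u : List (Fin m) → ℝ) : List (Fin m) → ℝ
  | [] => (∑ i : Fin m, u [i]) / m - u []
  | a :: t =>
      (β * u t + (1 - β) * (∑ i : Fin m, u (i :: a :: t)) / m - u (a :: t)) *
        pB β ^ (-((a :: t).length : ℤ))

/-- A branch: an infinite path starting at the root, following successors. -/
def IsBranch (m : ℕ) (b : ℕ → List (Fin m)) : Prop :=
  b 0 = [] ∧ ∀ n, ∃ i : Fin m, b (n + 1) = i :: b n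

/-- Homogeneous Dirichlet boundary condition: `u → 0` along every branch. -/
def ZeroOnBoundary (m : ℕ) (u : List (Fin m) → ℝ) : Prop :=
  ∀ b : ℕ → List (Fin m), IsBranch m b → Tendsto (fun n => u (b n)) atTop (𝓝 0)

/-- `lam` is a principal eigenvalue of `Δ_β`: it is positive and admits a bounded
nonnegative nontrivial eigenfunction vanishing on the boundary. -/
def IsPrincipalEigenvalue (m : ℕ) (β lam : ℝ) : Prop :=
  0 < lam ∧ ∃ u : List (Fin m) → ℝ,
    (∃ M, ∀ x, |u x| ≤ M) ∧ (∀ x, 0 ≤ u x) ∧ u ≠ 0 ∧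
    (∀ x, -lapB m β u x = lam * u x) ∧ ZeroOnBoundary m u

/-- Membership in the set `A_β`. -/
def memA (m : ℕ) (β lam : ℝ) : Prop :=
  0 < lam ∧ ∃ v : List (Fin m) → ℝ, ∃ c C : ℝ, 0 < c ∧
    (∀ x, c < v x ∧ v x < C) ∧ ∀ x, lapB m β v x + lam * v x ≤ 0

/-- `λ₁(β) = sup A_β`. -/
noncomputable def lam1 (m : ℕ) (β : ℝ) : ℝ := sSup {lam | memA m β lam}

theorem stmt2 (m : ℕ) (hm : 2 ≤ m) (β : ℝ) (hβ0 : 0 ≤ β) (hβ1 : β < 1)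
    (u : List (Fin m) → ℝ)
    (hsuper : ∀ x, 0 ≤ -lapB m β u x)
    (hbdry : ∀ b : ℕ → List (Fin m), IsBranch m b →
      ∀ ε > (0 : ℝ), ∀ᶠ n in atTop, -ε ≤ u (b n)) :
    ∀ x, 0 ≤ u x := by
  intro x0
  by_contra hneg
  push_neg at hneg
  have hmpos : (0:ℝ) < m := by
    have : (0:ℕ) < m := by omega
    exact_mod_cast this
  have hβ' : (0:ℝ) < 1 - β := by linarith
  have hpB : 0 < pB β := by
    unfold pB
    split
    · norm_num
    · exact div_pos (lt_of_le_of_ne hβ0 (Ne.symm (by assumption))) hβ'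
  -- key step: from a vertex where u is no larger than at its predecessor (or at the root),
  -- there is a successor where u does not increase
  have key : ∀ x : List (Fin m), (x = [] ∨ u x ≤ u x.tail) → ∃ i : Fin m, u (i :: x) ≤ u x := by
    intro x hx
    have havg : (∑ i : Fin m, u (i :: x)) / m ≤ u x := by
      cases x with
      | nil =>
        have h := hsuper []
        simp only [lapB] at h
        linarith
      | cons a t =>
        have h := hsuper (a :: t)
        simp only [lapB] at h
        have hp : (0:ℝ) < pB β ^ (-(((a :: t).length : ℕ) : ℤ)) := zpow_pos hpB _
        have hA : β * u t + (1 - β) * (∑ i : Fin m, u (i :: a :: t)) / m - u (a :: t) ≤ 0 := by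
          by_contra h'
          push_neg at h'
          nlinarith
        rcases hx with h0 | hle
        · exact absurd h0 (by simp)
        · simp only [List.tail_cons] at hle
          have h2 : (1 - β) * ((∑ i : Fin m, u (i :: a :: t)) / m) ≤ (1 - β) * u (a :: t) := by
            have : (1 - β) * (∑ i : Fin m, u (i :: a :: t)) / m
                = (1 - β) * ((∑ i : Fin m, u (i :: a :: t)) / m) := by ring
            nlinarith [hA, hle]
          exact le_of_mul_le_mul_left h2 hβ'
    -- a minimizer among successors is below the average
    obtain ⟨i, _, hi⟩ := Finset.exists_min_image (Finset.univ : Finset (Fin m))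
      (fun i => u (i :: x)) ⟨⟨0, by omega⟩, Finset.mem_univ _⟩
    refine ⟨i, le_trans ?_ havg⟩
    rw [le_div_iff₀ hmpos]
    calc u (i :: x) * m = ∑ _j : Fin m, u (i :: x) := by
          rw [Finset.sum_const, Finset.card_univ, Fintype.card_fin, nsmul_eq_mul]; ring
      _ ≤ ∑ j : Fin m, u (j :: x) :=
          Finset.sum_le_sum fun j _ => hi j (Finset.mem_univ j)
  -- the invariant predicate
  set P : List (Fin m) → Prop := fun x => x = [] ∨ u x ≤ u x.tail with hP
  have step : ∀ x : {x // P x}, ∃ y : {x // P x},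
      (∃ i : Fin m, y.1 = i :: x.1) ∧ u y.1 ≤ u x.1 := by
    rintro ⟨x, hx⟩
    obtain ⟨i, hi⟩ := key x hx
    exact ⟨⟨i :: x, Or.inr (by simpa using hi)⟩, ⟨i, rfl⟩, hi⟩
  choose g hg1 hg2 using step
  -- find the minimizing ancestor y of x0
  obtain ⟨k, hk, hkmin⟩ := Finset.exists_min_image (Finset.range (x0.length + 1))
    (fun k => u (x0.drop k)) ⟨0, by simp⟩
  have hy : P (x0.drop k) := by
    by_cases hnil : x0.drop k = []
    · exact Or.inl hnil
    · right
      have hk' : k < x0.length := by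
        by_contra hc
        push_neg at hc
        exact hnil (List.drop_eq_nil_of_le hc)
      have ht : (x0.drop k).tail = x0.drop (k + 1) := List.tail_drop
      rw [ht]
      exact hkmin (k + 1) (Finset.mem_range.mpr (by omega))
  set y : List (Fin m) := x0.drop k with hydef
  have hy0 : u y < 0 := lt_of_le_of_lt (hkmin 0 (by simp)) (by simpa using hneg)
  -- the descending sequence from y
  set c : ℕ → List (Fin m) := fun n => (g^[n] ⟨y, hy⟩).1 with hc
  have hcsucc : ∀ n, (∃ i : Fin m, c (n + 1) = i :: c n) ∧ u (c (n + 1)) ≤ u (c n) := by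
    intro n
    have : g^[n + 1] ⟨y, hy⟩ = g (g^[n] ⟨y, hy⟩) := Function.iterate_succ_apply' g n _
    constructor
    · simpa [hc, this] using hg1 (g^[n] ⟨y, hy⟩)
    · simpa [hc, this] using hg2 (g^[n] ⟨y, hy⟩)
  have hcmono : ∀ n, u (c n) ≤ u y := by
    intro n
    induction n with
    | zero => simp [hc]
    | succ n ih => exact le_trans (hcsucc n).2 ih
  set L : ℕ := y.length with hL
  set b : ℕ → List (Fin m) := fun n => if n < L then y.drop (L - n) else c (n - L) with hb
  have hbranch : IsBranch m b := by
    constructor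
    · by_cases h0 : 0 < L
      · simp [hb, h0]; exact hL.symm.le
      · have hL0 : L = 0 := by omega
        have : y = [] := List.length_eq_zero_iff.mp hL0
        simp [hb, hL0, hc, this]
    · intro n
      rcases lt_trichotomy (n + 1) L with h1 | h1 | h1
      · have hn : n < L := by omega
        have hlt : L - (n + 1) < y.length := by omega
        refine ⟨y.get ⟨L - (n + 1), hlt⟩, ?_⟩
        simp only [hb, if_pos h1, if_pos hn]
        have : L - n = (L - (n + 1)) + 1 := by omega
        rw [this, List.drop_eq_getElem_cons hlt]
        simp
      · -- b (n+1) = c 0 = y, b n = y.drop 1 = y.tail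
        have hn : n < L := by omega
        have hynil : y ≠ [] := by
          intro h
          rw [h] at hL
          simp at hL
          omega
        refine ⟨y.head hynil, ?_⟩
        simp only [hb, if_neg (by omega : ¬ n + 1 < L), if_pos hn]
        have h2 : n + 1 - L = 0 := by omega
        have h3 : L - n = 1 := by omega
        rw [h2, h3]
        simp [hc, List.drop_one, List.cons_head_tail]
      · have hn : ¬ n < L := by omega
        obtain ⟨i, hi⟩ := (hcsucc (n - L)).1
        refine ⟨i, ?_⟩
        simp only [hb, if_neg (by omega : ¬ n + 1 < L), if_neg hn]
        have : n + 1 - L = (n - L) + 1 := by omega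
        rw [this, hi]
  -- contradiction with the boundary condition
  have hev := hbdry b hbranch (-u y / 2) (by linarith)
  rw [Filter.eventually_atTop] at hev
  obtain ⟨N, hN⟩ := hev
  have h1 := hN (max N L) (le_max_left _ _)
  have h2 : u (b (max N L)) ≤ u y := by
    have hge : ¬ max N L < L := by
      have := le_max_right N L
      omega
    simp only [hb, if_neg hge]
    exact hcmono _
  linarith
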